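/- If X and Y are independent discrete random variables taking values in an abelian group, then H(X − Y) ≤ 3 H(X + Y) − H(X) − H(Y). -/

import Mathlib

open MeasureTheory ProbabilityTheory Real

open Finset

namespace EntAux

variable {Ω' : Type*} [Fintype Ω']

noncomputable def pE {S : Type*} [Fintype S] [DecidableEq S] (w : Ω' → ℝ) (f : Ω' → S)
    (s : S) : ℝ :=
  ∑ ω, if f ω = s then w ω else 0

noncomputable def entW {S : Type*} [Fintype S] [DecidableEq S] (w : Ω' → ℝ) (f : Ω' → S) : ℝ :=
  ∑ s, Real.negMulLog (pE w f s)

variable {S T U V : Type*} [Fintype S] [DecidableEq S] [Fintype T] [DecidableEq T]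
  [Fintype U] [DecidableEq U] [Fintype V] [DecidableEq V]

lemma pE_nonneg {w : Ω' → ℝ} (hw : ∀ ω, 0 ≤ w ω) (f : Ω' → S) (s : S) : 0 ≤ pE w f s := by
  unfold pE
  refine Finset.sum_nonneg fun ω _ => ?_
  split
  · exact hw ω
  · exact le_refl _

lemma sum_pE (w : Ω' → ℝ) (f : Ω' → S) : ∑ s, pE w f s = ∑ ω, w ω := by
  unfold pE
  rw [Finset.sum_comm]
  refine Finset.sum_congr rfl fun ω _ => ?_
  simp

lemma pE_comp (w : Ω' → ℝ) (f : Ω' → S) (φ : S → T) (t : T) :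
    pE w (fun ω => φ (f ω)) t = ∑ s ∈ univ.filter (fun s => φ s = t), pE w f s := by
  unfold pE
  rw [Finset.sum_comm]
  refine Finset.sum_congr rfl fun ω _ => ?_
  rw [Finset.sum_ite_eq (univ.filter (fun s => φ s = t)) (f ω) (fun _ => w ω)]
  simp

lemma pE_le_pE_comp {w : Ω' → ℝ} (hw : ∀ ω, 0 ≤ w ω) (f : Ω' → S) (φ : S → T) (s : S) :
    pE w f s ≤ pE w (fun ω => φ (f ω)) (φ s) := by
  conv_rhs => rw [pE_comp]
  exact Finset.single_le_sum (f := fun i => pE w f i) (fun i _ => pE_nonneg hw f i)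
    (Finset.mem_filter.2 ⟨Finset.mem_univ s, rfl⟩)

lemma pE_pair_snd (w : Ω' → ℝ) (f : Ω' → S) (g : Ω' → T) (t : T) :
    ∑ s, pE w (fun ω => (f ω, g ω)) (s, t) = pE w g t := by
  unfold pE
  rw [Finset.sum_comm]
  refine Finset.sum_congr rfl fun ω _ => ?_
  simp [Prod.ext_iff, ite_and, Finset.sum_ite_eq]

lemma pE_pair_comp (w : Ω' → ℝ) (f : Ω' → S) (g : Ω' → T) (φ : T → U) (s : S) (u : U) :
    pE w (fun ω => (f ω, φ (g ω))) (s, u)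
      = ∑ t ∈ univ.filter (fun t => φ t = u), pE w (fun ω => (f ω, g ω)) (s, t) := by
  unfold pE
  rw [Finset.sum_comm]
  refine Finset.sum_congr rfl fun ω _ => ?_
  by_cases h1 : f ω = s
  · simp [Prod.ext_iff, ite_and, h1, Finset.sum_ite_eq]
  · simp [Prod.ext_iff, ite_and, h1]

lemma gibbs {ι : Type*} (s : Finset ι) (a c : ι → ℝ) (ha : ∀ i ∈ s, 0 ≤ a i)
    (hc : ∀ i ∈ s, 0 ≤ c i) (hac : ∀ i ∈ s, a i ≠ 0 → c i ≠ 0)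
    (hsum : ∑ i ∈ s, c i ≤ ∑ i ∈ s, a i) :
    ∑ i ∈ s, a i * Real.log (c i) ≤ ∑ i ∈ s, a i * Real.log (a i) := by
  have key : ∀ i ∈ s, a i * Real.log (c i) - a i * Real.log (a i) ≤ c i - a i := by
    intro i hi
    rcases eq_or_lt_of_le (ha i hi) with h0 | h0
    · rw [← h0]; simpa using hc i hi
    · have hci : 0 < c i := (hc i hi).lt_of_ne (Ne.symm (hac i hi (ne_of_gt h0)))
      have hl := Real.log_le_sub_one_of_pos (div_pos hci h0)
      rw [Real.log_div (ne_of_gt hci) (ne_of_gt h0)] at hl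
      have := mul_le_mul_of_nonneg_left hl (le_of_lt h0)
      rw [mul_sub] at this
      have hdiv : a i * (c i / a i) = c i := by field_simp
      nlinarith
  have h2 := Finset.sum_le_sum key
  rw [Finset.sum_sub_distrib, Finset.sum_sub_distrib] at h2
  linarith

lemma negMulLog_add_le {x y : ℝ} (hx : 0 ≤ x) (hy : 0 ≤ y) :
    Real.negMulLog (x + y) ≤ Real.negMulLog x + Real.negMulLog y := by
  have h1 : x * Real.log x ≤ x * Real.log (x + y) := by
    rcases eq_or_lt_of_le hx with h | h
    · simp [← h]
    · exact mul_le_mul_of_nonneg_left (Real.log_le_log h (by linarith)) hx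
  have h2 : y * Real.log y ≤ y * Real.log (x + y) := by
    rcases eq_or_lt_of_le hy with h | h
    · simp [← h]
    · exact mul_le_mul_of_nonneg_left (Real.log_le_log h (by linarith)) hy
  simp only [Real.negMulLog, neg_mul]
  nlinarith [add_mul x y (Real.log (x + y))]

lemma negMulLog_sum_le {ι : Type*} (s : Finset ι) (x : ι → ℝ) (hx : ∀ i ∈ s, 0 ≤ x i) :
    Real.negMulLog (∑ i ∈ s, x i) ≤ ∑ i ∈ s, Real.negMulLog (x i) := by
  induction s using Finset.cons_induction with
  | empty => simp
  | cons i s his ih =>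
    rw [Finset.sum_cons, Finset.sum_cons]
    have h1 : 0 ≤ x i := hx i (Finset.mem_cons_self _ _)
    have h2 : 0 ≤ ∑ j ∈ s, x j :=
      Finset.sum_nonneg fun j hj => hx j (Finset.mem_cons.2 (Or.inr hj))
    calc Real.negMulLog (x i + ∑ j ∈ s, x j)
        ≤ Real.negMulLog (x i) + Real.negMulLog (∑ j ∈ s, x j) := negMulLog_add_le h1 h2
      _ ≤ _ := add_le_add_right (ih fun j hj => hx j (Finset.mem_cons.2 (Or.inr hj))) _

lemma entW_comp_le {w : Ω' → ℝ} (hw : ∀ ω, 0 ≤ w ω) (f : Ω' → S) (φ : S → T) :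
    entW w (fun ω => φ (f ω)) ≤ entW w f := by
  unfold entW
  rw [← Finset.sum_fiberwise univ φ (fun s => Real.negMulLog (pE w f s))]
  refine Finset.sum_le_sum fun t _ => ?_
  rw [pE_comp]
  exact negMulLog_sum_le _ _ fun s _ => pE_nonneg hw f s

lemma pE_comp_inj (w : Ω' → ℝ) (f : Ω' → S) (φ : S → T) (hφ : Function.Injective φ) (s : S) :
    pE w (fun ω => φ (f ω)) (φ s) = pE w f s := by
  rw [pE_comp, show univ.filter (fun s' => φ s' = φ s) = {s} from by
    ext s'; simp [hφ.eq_iff]]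
  simp

lemma entW_comp_inj (w : Ω' → ℝ) (f : Ω' → S) (φ : S → T) (hφ : Function.Injective φ) :
    entW w (fun ω => φ (f ω)) = entW w f := by
  unfold entW
  have h0 : ∀ t ∈ univ, t ∉ Finset.image φ univ →
      Real.negMulLog (pE w (fun ω => φ (f ω)) t) = 0 := by
    intro t _ ht
    rw [pE_comp, Finset.filter_false_of_mem, Finset.sum_empty]
    · simp
    · intro s _ hs
      exact ht (Finset.mem_image.2 ⟨s, Finset.mem_univ s, hs⟩)
  rw [← Finset.sum_subset (Finset.subset_univ (Finset.image φ univ)) h0,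
    Finset.sum_image (fun x _ y _ h => hφ h)]
  exact Finset.sum_congr rfl fun s _ => by rw [pE_comp_inj w f φ hφ s]

lemma base {w : Ω' → ℝ} (hw : ∀ ω, 0 ≤ w ω) (f : Ω' → S) (g : Ω' → T) (φ : T → U) :
    entW w (fun ω => (f ω, g ω)) + entW w (fun ω => φ (g ω))
      ≤ entW w (fun ω => (f ω, φ (g ω))) + entW w g := by
  set a : S × T → ℝ := pE w (fun ω => (f ω, g ω)) with ha_def
  set A : T → ℝ := pE w g with hA_def
  set b : S × U → ℝ := pE w (fun ω => (f ω, φ (g ω))) with hb_def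
  set B : U → ℝ := pE w (fun ω => φ (g ω)) with hB_def
  have ha0 : ∀ p, 0 ≤ a p := fun p => pE_nonneg hw _ p
  have hA0 : ∀ t, 0 ≤ A t := fun t => pE_nonneg hw _ t
  have hb0 : ∀ q, 0 ≤ b q := fun q => pE_nonneg hw _ q
  have hB0 : ∀ u, 0 ≤ B u := fun u => pE_nonneg hw _ u
  have hmarg : ∀ t, ∑ s, a (s, t) = A t := fun t => pE_pair_snd w f g t
  have hmargb : ∀ u, ∑ s, b (s, u) = B u := fun u => pE_pair_snd w f (fun ω => φ (g ω)) u
  have hBfib : ∀ u, B u = ∑ t ∈ univ.filter (fun t => φ t = u), A t := fun u => pE_comp w g φ u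
  have hbfib : ∀ s u, b (s, u) = ∑ t ∈ univ.filter (fun t => φ t = u), a (s, t) :=
    fun s u => pE_pair_comp w f g φ s u
  have haA : ∀ s t, a (s, t) ≤ A t := fun s t => by
    rw [← hmarg t]
    exact Finset.single_le_sum (f := fun s' => a (s', t)) (fun s' _ => ha0 _) (Finset.mem_univ s)
  have hab : ∀ s t, a (s, t) ≤ b (s, φ t) := fun s t => by
    rw [hbfib]
    exact Finset.single_le_sum (f := fun t' => a (s, t')) (fun t' _ => ha0 _)
      (Finset.mem_filter.2 ⟨Finset.mem_univ t, rfl⟩)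
  have hAB : ∀ t, A t ≤ B (φ t) := fun t => pE_le_pE_comp hw g φ t
  -- rewrite the four entropy sums
  have R1 : ∑ t, A t * Real.log (A t) = ∑ p : S × T, a p * Real.log (A p.2) := by
    rw [Fintype.sum_prod_type, Finset.sum_comm]
    refine Finset.sum_congr rfl fun t _ => ?_
    have hr : ∀ x : S, a (x, t) * Real.log (A (x, t).2) = a (x, t) * Real.log (A t) :=
      fun x => rfl
    simp only [hr]
    rw [← Finset.sum_mul, hmarg]
  have R2 : ∑ u, B u * Real.log (B u) = ∑ p : S × T, a p * Real.log (B (φ p.2)) := by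
    have step1 : ∑ u, B u * Real.log (B u) = ∑ t, A t * Real.log (B (φ t)) := by
      rw [← Finset.sum_fiberwise univ φ (fun t => A t * Real.log (B (φ t)))]
      refine Finset.sum_congr rfl fun u _ => ?_
      have hr : ∑ t ∈ univ.filter (fun t => φ t = u), A t * Real.log (B (φ t))
          = ∑ t ∈ univ.filter (fun t => φ t = u), A t * Real.log (B u) :=
        Finset.sum_congr rfl fun t ht => by rw [(Finset.mem_filter.1 ht).2]
      rw [hr, ← Finset.sum_mul, ← hBfib u]
    rw [step1, Fintype.sum_prod_type, Finset.sum_comm]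
    refine Finset.sum_congr rfl fun t _ => ?_
    have hr : ∀ x : S, a (x, t) * Real.log (B (φ (x, t).2)) = a (x, t) * Real.log (B (φ t)) :=
      fun x => rfl
    simp only [hr]
    rw [← Finset.sum_mul, hmarg]
  have R3 : ∑ q : S × U, b q * Real.log (b q)
      = ∑ p : S × T, a p * Real.log (b (p.1, φ p.2)) := by
    rw [Fintype.sum_prod_type, Fintype.sum_prod_type]
    refine Finset.sum_congr rfl fun s _ => ?_
    have hr : ∀ x : T, a (s, x) * Real.log (b ((s, x).1, φ (s, x).2))
        = a (s, x) * Real.log (b (s, φ x)) := fun x => rfl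
    simp only [hr]
    rw [← Finset.sum_fiberwise univ φ (fun t => a (s, t) * Real.log (b (s, φ t)))]
    refine Finset.sum_congr rfl fun u _ => ?_
    have hr2 : ∑ t ∈ univ.filter (fun t => φ t = u), a (s, t) * Real.log (b (s, φ t))
        = ∑ t ∈ univ.filter (fun t => φ t = u), a (s, t) * Real.log (b (s, u)) :=
      Finset.sum_congr rfl fun t ht => by rw [(Finset.mem_filter.1 ht).2]
    rw [hr2, ← Finset.sum_mul, ← hbfib s u]
  -- the correction distribution
  set c : S × T → ℝ := fun p => if B (φ p.2) = 0 then 0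
    else b (p.1, φ p.2) * A p.2 / B (φ p.2) with hc_def
  have key : ∀ p : S × T, a p * Real.log (b (p.1, φ p.2)) + a p * Real.log (A p.2)
      = a p * Real.log (c p) + a p * Real.log (B (φ p.2)) := by
    rintro ⟨s, t⟩
    rcases eq_or_ne (a (s, t)) 0 with h | h
    · simp [h]
    · have hapos : 0 < a (s, t) := (ha0 _).lt_of_ne (Ne.symm h)
      have hApos : 0 < A t := lt_of_lt_of_le hapos (haA s t)
      have hbpos : 0 < b (s, φ t) := lt_of_lt_of_le hapos (hab s t)
      have hBpos : 0 < B (φ t) := lt_of_lt_of_le hApos (hAB t)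
      have hc : c (s, t) = b (s, φ t) * A t / B (φ t) := if_neg (ne_of_gt hBpos)
      rw [hc, Real.log_div (by positivity) (ne_of_gt hBpos),
        Real.log_mul (ne_of_gt hbpos) (ne_of_gt hApos)]
      ring
  have hgibbs : ∑ p : S × T, a p * Real.log (c p) ≤ ∑ p : S × T, a p * Real.log (a p) := by
    refine gibbs univ a c (fun p _ => ha0 p) ?_ ?_ ?_
    · rintro ⟨s, t⟩ _
      simp only [hc_def]
      split
      · exact le_refl 0
      · have := hb0 (s, φ t); have := hA0 t; have := hB0 (φ t); positivity
    · rintro ⟨s, t⟩ _ h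
      have hapos : 0 < a (s, t) := (ha0 _).lt_of_ne (Ne.symm h)
      have hApos : 0 < A t := lt_of_lt_of_le hapos (haA s t)
      have hbpos : 0 < b (s, φ t) := lt_of_lt_of_le hapos (hab s t)
      have hBpos : 0 < B (φ t) := lt_of_lt_of_le hApos (hAB t)
      have hc : c (s, t) = b (s, φ t) * A t / B (φ t) := if_neg (ne_of_gt hBpos)
      rw [hc]
      positivity
    · have h1 : ∑ p : S × T, c p ≤ ∑ t, A t := by
        rw [Fintype.sum_prod_type, Finset.sum_comm]
        refine Finset.sum_le_sum fun t _ => ?_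
        have : ∑ s, c (s, t) = if B (φ t) = 0 then 0 else A t := by
          simp only [hc_def]
          split
          · simp
          · rename_i hB
            rw [← Finset.sum_div, ← Finset.sum_mul, hmargb, mul_comm,
              mul_div_assoc, div_self hB, mul_one]
        rw [this]
        split
        · exact hA0 t
        · exact le_refl _
      have h2 : ∑ t, A t = ∑ p : S × T, a p := by
        rw [hA_def, ha_def, sum_pE, sum_pE]
      calc ∑ p : S × T, c p ≤ ∑ t, A t := h1
        _ = ∑ p : S × T, a p := h2
  -- assemble
  unfold entW
  simp only [Real.negMulLog, neg_mul, ← ha_def, ← hA_def, ← hb_def, ← hB_def]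
  rw [Finset.sum_neg_distrib, Finset.sum_neg_distrib, Finset.sum_neg_distrib,
    Finset.sum_neg_distrib]
  have expand : ∑ p : S × T, a p * Real.log (b (p.1, φ p.2))
      + ∑ p : S × T, a p * Real.log (A p.2)
      ≤ ∑ p : S × T, a p * Real.log (a p) + ∑ p : S × T, a p * Real.log (B (φ p.2)) := by
    rw [← Finset.sum_add_distrib, ← Finset.sum_add_distrib]
    calc ∑ p : S × T, (a p * Real.log (b (p.1, φ p.2)) + a p * Real.log (A p.2))
        = ∑ p : S × T, (a p * Real.log (c p) + a p * Real.log (B (φ p.2))) :=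
          Finset.sum_congr rfl fun p _ => key p
      _ ≤ _ := by
          rw [Finset.sum_add_distrib, Finset.sum_add_distrib]
          exact add_le_add_left hgibbs _
  rw [R1, R2, R3]
  linarith

lemma subm {w : Ω' → ℝ} (hw : ∀ ω, 0 ≤ w ω) (f : Ω' → S) (g : Ω' → T)
    (φ : S → V) (ψ : T → V) (hk : ∀ ω, φ (f ω) = ψ (g ω)) :
    entW w (fun ω => (f ω, g ω)) + entW w (fun ω => φ (f ω)) ≤ entW w f + entW w g := by
  have hb := base hw f g ψ
  have e1 : entW w (fun ω => (f ω, ψ (g ω))) = entW w f := by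
    have h : (fun ω => (f ω, ψ (g ω))) = fun ω => ((fun s => (s, φ s)) (f ω)) :=
      funext fun ω => by rw [← hk ω]
    rw [h, entW_comp_inj w f (fun s => (s, φ s))
      (fun x y hxy => congrArg Prod.fst hxy)]
  have e2 : entW w (fun ω => ψ (g ω)) = entW w (fun ω => φ (f ω)) := by
    have h : (fun ω => ψ (g ω)) = fun ω => φ (f ω) := funext fun ω => (hk ω).symm
    rw [h]
  rw [e1, e2] at hb
  linarith

lemma entW_const_eq_zero {w : Ω' → ℝ} (hw1 : ∑ ω, w ω = 1) :
    entW w (fun _ => (0 : Fin 1)) = 0 := by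
  unfold entW pE
  simp [hw1]

lemma subadd {w : Ω' → ℝ} (hw : ∀ ω, 0 ≤ w ω) (hw1 : ∑ ω, w ω = 1)
    (f : Ω' → S) (g : Ω' → T) :
    entW w (fun ω => (f ω, g ω)) ≤ entW w f + entW w g := by
  have := subm hw f g (fun _ => (0 : Fin 1)) (fun _ => (0 : Fin 1)) (fun _ => rfl)
  rw [entW_const_eq_zero hw1] at this
  linarith

lemma sum_negMulLog_prod {α β : Type*} [Fintype α] [Fintype β] (P : α → ℝ) (Q : β → ℝ)
    (hP : ∑ a, P a = 1) (hQ : ∑ b, Q b = 1) :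
    ∑ p : α × β, Real.negMulLog (P p.1 * Q p.2)
      = ∑ a, Real.negMulLog (P a) + ∑ b, Real.negMulLog (Q b) := by
  rw [Fintype.sum_prod_type]
  have hr : ∀ a : α, ∑ b : β, Real.negMulLog (P a * Q b)
      = ∑ b : β, (Q b * Real.negMulLog (P a) + P a * Real.negMulLog (Q b)) :=
    fun a => Finset.sum_congr rfl fun b _ => Real.negMulLog_mul (P a) (Q b)
  simp only [hr]
  simp only [Finset.sum_add_distrib, ← Finset.sum_mul, ← Finset.mul_sum, hQ]
  rw [hP]
  ring

section Concrete

variable {G : Type*} [AddCommGroup G] [Fintype G] [DecidableEq G]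

noncomputable def conv (px qy : G → ℝ) : G → ℝ := fun s => ∑ x, px x * qy (s - x)
noncomputable def qcnv (qy : G → ℝ) : G → ℝ := fun s => ∑ y, qy y * qy (s - y)
noncomputable def dcnv (px qy : G → ℝ) : G → ℝ := fun d => ∑ x, px x * qy (x - d)
noncomputable def w3 (px qy : G → ℝ) : G × G × G → ℝ :=
  fun v => px v.1 * (qy v.2.1 * qy v.2.2)

variable (px qy : G → ℝ)

lemma sum3 (h : G × G × G → ℝ) : ∑ v : G × G × G, h v = ∑ x, ∑ y, ∑ y', h (x, y, y') := by
  rw [Fintype.sum_prod_type]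
  exact Finset.sum_congr rfl fun x _ => Fintype.sum_prod_type _

lemma sum_ite_const {ι : Type*} (s : Finset ι) (c : Prop) [Decidable c] (f : ι → ℝ) :
    ∑ i ∈ s, (if c then f i else 0) = if c then ∑ i ∈ s, f i else 0 := by
  split <;> simp

lemma sum_ite_shift_add (t x : G) (h : G → ℝ) :
    ∑ y, (if x + y = t then h y else 0) = h (t - x) := by
  have key : ∀ y : G, (x + y = t) = (y = t - x) := fun y =>
    propext ⟨fun hh => by rw [← hh]; abel, fun hh => by rw [hh]; abel⟩
  simp only [key, Finset.sum_ite_eq', Finset.mem_univ, if_true]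

lemma sum_ite_shift_sub (d x : G) (h : G → ℝ) :
    ∑ y, (if x - y = d then h y else 0) = h (x - d) := by
  have key : ∀ y : G, (x - y = d) = (y = x - d) := fun y =>
    propext ⟨fun hh => by rw [← hh]; abel, fun hh => by rw [hh]; abel⟩
  simp only [key, Finset.sum_ite_eq', Finset.mem_univ, if_true]

lemma sum_shift (x : G) : ∑ s, qy (s - x) = ∑ s, qy s :=
  Fintype.sum_equiv (Equiv.subRight x) _ _ fun s => rfl

lemma sum_conv (h1 : ∑ x, px x = 1) (h2 : ∑ y, qy y = 1) : ∑ s, conv px qy s = 1 := by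
  unfold conv
  rw [Finset.sum_comm]
  have : ∀ x, ∑ s, px x * qy (s - x) = px x := fun x => by
    rw [← Finset.mul_sum, sum_shift qy x, h2, mul_one]
  simp only [this, h1]

lemma sum_qcnv (h2 : ∑ y, qy y = 1) : ∑ s, qcnv qy s = 1 := by
  unfold qcnv
  rw [Finset.sum_comm]
  have : ∀ x, ∑ s, qy x * qy (s - x) = qy x := fun x => by
    rw [← Finset.mul_sum, sum_shift qy x, h2, mul_one]
  simp only [this, h2]

lemma sum_w3 (h1 : ∑ x, px x = 1) (h2 : ∑ y, qy y = 1) : ∑ v, w3 px qy v = 1 := by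
  unfold w3
  rw [sum3]
  simp only [← Finset.mul_sum, h2, mul_one, h1]

lemma pE_X (h2 : ∑ y, qy y = 1) (x0 : G) :
    pE (w3 px qy) (fun v => v.1) x0 = px x0 := by
  unfold pE w3
  rw [sum3]
  have step : ∀ x y : G, ∑ y' : G, (if x = x0 then px x * (qy y * qy y') else 0)
      = if x = x0 then px x * qy y else 0 := by
    intro x y
    rw [sum_ite_const]
    by_cases h : x = x0 <;> simp [h, ← Finset.mul_sum, h2]
  have step2 : ∀ x : G, ∑ y : G, (if x = x0 then px x * qy y else 0)
      = if x = x0 then px x else 0 := by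
    intro x
    rw [sum_ite_const]
    by_cases h : x = x0 <;> simp [h, ← Finset.mul_sum, h2]
  simp only [step, step2, Finset.sum_ite_eq', Finset.mem_univ, if_true]

lemma pE_S1 (h2 : ∑ y, qy y = 1) (s : G) :
    pE (w3 px qy) (fun v => v.1 + v.2.1) s = conv px qy s := by
  unfold pE w3
  rw [sum3]
  have step : ∀ x y : G, ∑ y' : G, (if x + y = s then px x * (qy y * qy y') else 0)
      = if x + y = s then px x * qy y else 0 := by
    intro x y
    rw [sum_ite_const]
    by_cases h : x + y = s <;> simp [h, ← Finset.mul_sum, h2]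
  simp only [step]
  exact Finset.sum_congr rfl fun x _ => sum_ite_shift_add s x (fun y => px x * qy y)

lemma pE_S2 (h2 : ∑ y, qy y = 1) (s : G) :
    pE (w3 px qy) (fun v => v.1 + v.2.2) s = conv px qy s := by
  unfold pE w3
  rw [sum3]
  have step : ∀ x y : G, ∑ y' : G, (if x + y' = s then px x * (qy y * qy y') else 0)
      = px x * qy y * qy (s - x) := by
    intro x y
    have : ∀ y' : G, (if x + y' = s then px x * (qy y * qy y') else 0)
        = if x + y' = s then (px x * qy y) * qy y' else 0 := by
      intro y'; split <;> ring
    simp only [this]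
    exact sum_ite_shift_add s x (fun y' => (px x * qy y) * qy y')
  simp only [step]
  unfold conv
  refine Finset.sum_congr rfl fun x _ => ?_
  rw [← Finset.sum_mul, ← Finset.mul_sum, h2, mul_one]

lemma pE_D (h2 : ∑ y, qy y = 1) (d : G) :
    pE (w3 px qy) (fun v => v.1 - v.2.2) d = dcnv px qy d := by
  unfold pE w3
  rw [sum3]
  have step : ∀ x y : G, ∑ y' : G, (if x - y' = d then px x * (qy y * qy y') else 0)
      = px x * qy y * qy (x - d) := by
    intro x y
    have : ∀ y' : G, (if x - y' = d then px x * (qy y * qy y') else 0)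
        = if x - y' = d then (px x * qy y) * qy y' else 0 := by
      intro y'; split <;> ring
    simp only [this]
    exact sum_ite_shift_sub d x (fun y' => (px x * qy y) * qy y')
  simp only [step]
  unfold dcnv
  refine Finset.sum_congr rfl fun x _ => ?_
  rw [← Finset.sum_mul, ← Finset.mul_sum, h2, mul_one]

lemma pE_W2 (h1 : ∑ x, px x = 1) (s : G) :
    pE (w3 px qy) (fun v => v.2.1 + v.2.2) s = qcnv qy s := by
  unfold pE w3
  rw [sum3]
  have step : ∀ x y : G, ∑ y' : G, (if y + y' = s then px x * (qy y * qy y') else 0)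
      = px x * (qy y * qy (s - y)) := by
    intro x y
    have : ∀ y' : G, (if y + y' = s then px x * (qy y * qy y') else 0)
        = if y + y' = s then (px x * qy y) * qy y' else 0 := by
      intro y'; split <;> ring
    simp only [this]
    rw [sum_ite_shift_add s y (fun y' => (px x * qy y) * qy y')]
    ring
  simp only [step]
  unfold qcnv
  simp only [← Finset.mul_sum]
  rw [← Finset.sum_mul, h1, one_mul]

lemma pE_S1Y2 (s y0 : G) :
    pE (w3 px qy) (fun v => (v.1 + v.2.1, v.2.2)) (s, y0) = conv px qy s * qy y0 := by
  unfold pE w3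
  rw [sum3]
  simp only [Prod.mk.injEq, ite_and]
  have step : ∀ x y : G, ∑ y' : G, (if x + y = s then if y' = y0 then
      px x * (qy y * qy y') else 0 else 0)
      = if x + y = s then px x * (qy y * qy y0) else 0 := by
    intro x y
    rw [sum_ite_const]
    by_cases h : x + y = s <;>
      simp [h, Finset.sum_ite_eq']
  simp only [step]
  have step2 : ∀ x : G, ∑ y : G, (if x + y = s then px x * (qy y * qy y0) else 0)
      = px x * (qy (s - x) * qy y0) :=
    fun x => sum_ite_shift_add s x (fun y => px x * (qy y * qy y0))
  simp only [step2]
  unfold conv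
  rw [Finset.sum_mul]
  exact Finset.sum_congr rfl fun x _ => by ring

lemma pE_S2Y1 (s y0 : G) :
    pE (w3 px qy) (fun v => (v.1 + v.2.2, v.2.1)) (s, y0) = conv px qy s * qy y0 := by
  unfold pE w3
  rw [sum3]
  simp only [Prod.mk.injEq, ite_and]
  have step : ∀ x y : G, ∑ y' : G, (if x + y' = s then if y = y0 then
      px x * (qy y * qy y') else 0 else 0)
      = if y = y0 then px x * (qy y * qy (s - x)) else 0 := by
    intro x y
    by_cases h : y = y0
    · simp only [h, if_true]
      have : ∀ y' : G, (if x + y' = s then px x * (qy y0 * qy y') else 0)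
          = if x + y' = s then (px x * qy y0) * qy y' else 0 := by
        intro y'; split <;> ring
      simp only [this, sum_ite_shift_add s x (fun y' => (px x * qy y0) * qy y')]
      ring
    · simp [h]
  simp only [step]
  have step2 : ∀ x : G, ∑ y : G, (if y = y0 then px x * (qy y * qy (s - x)) else 0)
      = px x * (qy y0 * qy (s - x)) := by
    intro x
    simp [Finset.sum_ite_eq']
  simp only [step2]
  unfold conv
  rw [Finset.sum_mul]
  exact Finset.sum_congr rfl fun x _ => by ring

lemma pE_XY2 (h2 : ∑ y, qy y = 1) (x0 y0 : G) :
    pE (w3 px qy) (fun v => (v.1, v.2.2)) (x0, y0) = px x0 * qy y0 := by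
  unfold pE w3
  rw [sum3]
  simp only [Prod.mk.injEq, ite_and]
  have step : ∀ x y : G, ∑ y' : G, (if x = x0 then if y' = y0 then
      px x * (qy y * qy y') else 0 else 0)
      = if x = x0 then px x * (qy y * qy y0) else 0 := by
    intro x y
    rw [sum_ite_const]
    by_cases h : x = x0 <;> simp [h, Finset.sum_ite_eq']
  simp only [step]
  have step2 : ∀ x : G, ∑ y : G, (if x = x0 then px x * (qy y * qy y0) else 0)
      = if x = x0 then px x * qy y0 else 0 := by
    intro x
    rw [sum_ite_const]
    by_cases h : x = x0
    · simp only [h, if_true]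
      have : ∀ y : G, px x0 * (qy y * qy y0) = qy y * (px x0 * qy y0) := fun y => by ring
      simp only [this]
      rw [← Finset.sum_mul, h2, one_mul]
    · simp [h]
  simp only [step2, Finset.sum_ite_eq', Finset.mem_univ, if_true]

lemma pE_XW2 (x0 s : G) :
    pE (w3 px qy) (fun v => (v.1, v.2.1 + v.2.2)) (x0, s) = px x0 * qcnv qy s := by
  unfold pE w3
  rw [sum3]
  simp only [Prod.mk.injEq, ite_and]
  have step : ∀ x y : G, ∑ y' : G, (if x = x0 then if y + y' = s then
      px x * (qy y * qy y') else 0 else 0)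
      = if x = x0 then px x * (qy y * qy (s - y)) else 0 := by
    intro x y
    rw [sum_ite_const]
    by_cases h : x = x0
    · simp only [h, if_true]
      have : ∀ y' : G, (if y + y' = s then px x0 * (qy y * qy y') else 0)
          = if y + y' = s then (px x0 * qy y) * qy y' else 0 := by
        intro y'; split <;> ring
      simp only [this, sum_ite_shift_add s y (fun y' => (px x0 * qy y) * qy y')]
      ring
    · simp [h]
  simp only [step]
  have step2 : ∀ x : G, ∑ y : G, (if x = x0 then px x * (qy y * qy (s - y)) else 0)
      = if x = x0 then px x * qcnv qy s else 0 := by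
    intro x
    rw [sum_ite_const]
    by_cases h : x = x0
    · simp only [h, if_true]
      unfold qcnv
      rw [Finset.mul_sum]
    · simp [h]
  simp only [step2, Finset.sum_ite_eq', Finset.mem_univ, if_true]

lemma pE_id' {Ω' : Type*} [Fintype Ω'] [DecidableEq Ω'] (w : Ω' → ℝ) (v0 : Ω') :
    pE w (fun v => v) v0 = w v0 := by
  unfold pE
  simp

theorem main_ineq (hpx0 : ∀ x, 0 ≤ px x) (hqy0 : ∀ y, 0 ≤ qy y)
    (h1 : ∑ x, px x = 1) (h2 : ∑ y, qy y = 1) :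
    ∑ d, Real.negMulLog (dcnv px qy d) ≤
      3 * (∑ s, Real.negMulLog (conv px qy s)) - (∑ x, Real.negMulLog (px x))
        - (∑ y, Real.negMulLog (qy y)) := by
  classical
  set w : G × G × G → ℝ := w3 px qy with hw_def
  have hw : ∀ v, 0 ≤ w v := fun v =>
    mul_nonneg (hpx0 _) (mul_nonneg (hqy0 _) (hqy0 _))
  have hw1 : ∑ v, w v = 1 := sum_w3 px qy h1 h2
  set Hs := ∑ s, Real.negMulLog (conv px qy s) with hHs
  set hXe := ∑ x, Real.negMulLog (px x) with hhXe
  set hYe := ∑ y, Real.negMulLog (qy y) with hhYe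
  set Hw2 := ∑ s, Real.negMulLog (qcnv qy s) with hHw2
  -- entW computations
  have e_X : entW w (fun v => v.1) = hXe := by
    unfold entW
    exact Finset.sum_congr rfl fun x _ => by rw [pE_X px qy h2]
  have e_S1 : entW w (fun v => v.1 + v.2.1) = Hs := by
    unfold entW
    exact Finset.sum_congr rfl fun s _ => by rw [pE_S1 px qy h2]
  have e_S2 : entW w (fun v => v.1 + v.2.2) = Hs := by
    unfold entW
    exact Finset.sum_congr rfl fun s _ => by rw [pE_S2 px qy h2]
  have e_D : entW w (fun v => v.1 - v.2.2) = ∑ d, Real.negMulLog (dcnv px qy d) := by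
    unfold entW
    exact Finset.sum_congr rfl fun d _ => by rw [pE_D px qy h2]
  have e_W2 : entW w (fun v => v.2.1 + v.2.2) = Hw2 := by
    unfold entW
    exact Finset.sum_congr rfl fun s _ => by rw [pE_W2 px qy h1]
  have e_S1Y2 : entW w (fun v => (v.1 + v.2.1, v.2.2)) = Hs + hYe := by
    unfold entW
    have hr : ∀ p : G × G, pE w (fun v => (v.1 + v.2.1, v.2.2)) p
        = conv px qy p.1 * qy p.2 := by
      rintro ⟨s, y⟩; exact pE_S1Y2 px qy s y
    simp only [hr]
    exact sum_negMulLog_prod _ _ (sum_conv px qy h1 h2) h2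
  have e_S2Y1 : entW w (fun v => (v.1 + v.2.2, v.2.1)) = Hs + hYe := by
    unfold entW
    have hr : ∀ p : G × G, pE w (fun v => (v.1 + v.2.2, v.2.1)) p
        = conv px qy p.1 * qy p.2 := by
      rintro ⟨s, y⟩; exact pE_S2Y1 px qy s y
    simp only [hr]
    exact sum_negMulLog_prod _ _ (sum_conv px qy h1 h2) h2
  have e_XY2 : entW w (fun v => (v.1, v.2.2)) = hXe + hYe := by
    unfold entW
    have hr : ∀ p : G × G, pE w (fun v => (v.1, v.2.2)) p = px p.1 * qy p.2 := by
      rintro ⟨x, y⟩; exact pE_XY2 px qy h2 x y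
    simp only [hr]
    exact sum_negMulLog_prod _ _ h1 h2
  have e_XW2 : entW w (fun v => (v.1, v.2.1 + v.2.2)) = hXe + Hw2 := by
    unfold entW
    have hr : ∀ p : G × G, pE w (fun v => (v.1, v.2.1 + v.2.2)) p
        = px p.1 * qcnv qy p.2 := by
      rintro ⟨x, s⟩; exact pE_XW2 px qy x s
    simp only [hr]
    exact sum_negMulLog_prod _ _ h1 (sum_qcnv qy h2)
  have hQ2 : ∑ u : G × G, qy u.1 * qy u.2 = 1 := by
    rw [Fintype.sum_prod_type]
    simp only [← Finset.mul_sum, h2, mul_one, h2]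
  have e_id : entW w (fun v => v) = hXe + (hYe + hYe) := by
    unfold entW
    have hr : ∀ v : G × G × G, pE w (fun v => v) v
        = px v.1 * (qy v.2.1 * qy v.2.2) := fun v => pE_id' w v
    simp only [hr]
    have := sum_negMulLog_prod (α := G) (β := G × G) px
      (fun u => qy u.1 * qy u.2) h1 hQ2
    rw [this]
    congr 1
    rw [sum_negMulLog_prod qy qy h2 h2]
  -- Step C1 : Hw2 ≤ entW w T3
  have C1 : Hw2 ≤ entW w (fun v => v.1 + (v.2.1 + v.2.2)) := by
    have hsub := subadd hw hw1 (fun v : G × G × G => v.1)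
      (fun v => v.1 + (v.2.1 + v.2.2))
    have hinj : Function.Injective (fun p : G × G => (p.1, p.1 + p.2)) := by
      intro p q h
      have ha := congrArg Prod.fst h
      have hb := congrArg Prod.snd h
      dsimp at ha hb
      exact Prod.ext ha (by rwa [ha, add_right_inj] at hb)
    have heq : entW w (fun v : G × G × G => (v.1, v.1 + (v.2.1 + v.2.2)))
        = entW w (fun v => (v.1, v.2.1 + v.2.2)) :=
      entW_comp_inj w (fun v => (v.1, v.2.1 + v.2.2)) (fun p => (p.1, p.1 + p.2)) hinj
    rw [heq, e_XW2, e_X] at hsub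
    linarith
  -- Step C2 : entW w T3 + hXe ≤ 2 * Hs
  have C2 : entW w (fun v : G × G × G => v.1 + (v.2.1 + v.2.2)) + hXe ≤ 2 * Hs := by
    have hsub := subm hw (fun v : G × G × G => (v.1 + v.2.1, v.2.2))
      (fun v => (v.1 + v.2.2, v.2.1)) (fun p => p.1 + p.2) (fun p => p.1 + p.2)
      (fun v => by dsimp only; abel)
    dsimp only at hsub
    have hT : (fun v : G × G × G => v.1 + v.2.1 + v.2.2)
        = fun v => v.1 + (v.2.1 + v.2.2) := funext fun v => by abel
    rw [hT] at hsub
    have hinj : Function.Injective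
        (fun v : G × G × G => ((v.1 + v.2.1, v.2.2), (v.1 + v.2.2, v.2.1))) := by
      intro u v h
      simp only [Prod.mk.injEq] at h
      obtain ⟨⟨ha, hb⟩, hc, hd⟩ := h
      rw [hd] at ha
      have h1' : u.1 = v.1 := add_right_cancel ha
      exact Prod.ext h1' (Prod.ext hd hb)
    have heq : entW w (fun v : G × G × G => ((v.1 + v.2.1, v.2.2), (v.1 + v.2.2, v.2.1)))
        = entW w (fun v => v) :=
      entW_comp_inj w (fun v => v)
        (fun v : G × G × G => ((v.1 + v.2.1, v.2.2), (v.1 + v.2.2, v.2.1))) hinj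
    rw [heq, e_id, e_S1Y2, e_S2Y1] at hsub
    linarith
  -- Step C3
  have C3 : entW w (fun v : G × G × G => v.1 - v.2.2) + hYe ≤ Hs + Hw2 := by
    have hsub := subm hw (fun v : G × G × G => (v.1 + v.2.1, v.2.1 + v.2.2))
      (fun v => (v.1, v.2.2)) (fun p => p.1 - p.2) (fun p => p.1 - p.2)
      (fun v => by dsimp only; abel)
    dsimp only at hsub
    have hT : (fun v : G × G × G => v.1 + v.2.1 - (v.2.1 + v.2.2))
        = fun v => v.1 - v.2.2 := funext fun v => by abel
    rw [hT] at hsub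
    have hinj : Function.Injective
        (fun v : G × G × G => ((v.1 + v.2.1, v.2.1 + v.2.2), (v.1, v.2.2))) := by
      intro u v h
      simp only [Prod.mk.injEq] at h
      obtain ⟨⟨ha, hb⟩, hc, hd⟩ := h
      refine Prod.ext hc (Prod.ext ?_ hd)
      rw [hc] at ha
      exact add_left_cancel ha
    have heq : entW w
        (fun v : G × G × G => ((v.1 + v.2.1, v.2.1 + v.2.2), (v.1, v.2.2)))
        = entW w (fun v => v) :=
      entW_comp_inj w (fun v => v)
        (fun v : G × G × G => ((v.1 + v.2.1, v.2.1 + v.2.2), (v.1, v.2.2))) hinj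
    rw [heq, e_id, e_XY2] at hsub
    have hf : entW w (fun v : G × G × G => (v.1 + v.2.1, v.2.1 + v.2.2)) ≤ Hs + Hw2 := by
      have := subadd hw hw1 (fun v : G × G × G => v.1 + v.2.1)
        (fun v => v.2.1 + v.2.2)
      rw [e_S1, e_W2] at this
      exact this
    linarith
  rw [← e_D]
  linarith

end Concrete

end EntAux

/-- Shannon entropy (natural log) of a finitely-valued random variable. -/
noncomputable def ent {Ω S : Type*} [MeasurableSpace Ω] [Fintype S]
    (μ : Measure Ω) (X : Ω → S) : ℝ :=
  ∑ s : S, Real.negMulLog ((μ (X ⁻¹' {s})).toReal)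

theorem stmt10 {Ω G : Type*} [MeasurableSpace Ω] [AddCommGroup G] [Fintype G]
    [MeasurableSpace G] [MeasurableSingletonClass G]
    (μ : Measure Ω) [IsProbabilityMeasure μ]
    (X Y : Ω → G) (hX : Measurable X) (hY : Measurable Y)
    (hind : IndepFun X Y μ) :
    ent μ (fun ω => X ω - Y ω) ≤
      3 * ent μ (fun ω => X ω + Y ω) - ent μ X - ent μ Y := by
  classical
  set px : G → ℝ := fun x => (μ (X ⁻¹' {x})).toReal with hpx_def
  set qy : G → ℝ := fun y => (μ (Y ⁻¹' {y})).toReal with hqy_def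
  have hpx0 : ∀ x, 0 ≤ px x := fun x => ENNReal.toReal_nonneg
  have hqy0 : ∀ y, 0 ≤ qy y := fun y => ENNReal.toReal_nonneg
  have hsum : ∀ Z : Ω → G, Measurable Z → ∑ s, (μ (Z ⁻¹' {s})).toReal = 1 := by
    intro Z hZ
    have hdisj : Pairwise (Function.onFun Disjoint fun s : G => Z ⁻¹' {s}) := by
      intro a b hab
      rw [Function.onFun, Set.disjoint_left]
      rintro ω ha hb
      exact hab (by rw [← ha, ← hb])
    have huniv : (⋃ s : G, Z ⁻¹' {s}) = Set.univ := by
      ext ω; simp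
    have hm := measure_iUnion (μ := μ) hdisj fun s => hZ (measurableSet_singleton s)
    rw [huniv, measure_univ, tsum_fintype] at hm
    have := congrArg ENNReal.toReal hm
    rw [ENNReal.toReal_one, ENNReal.toReal_sum (fun a _ => measure_ne_top μ _)] at this
    exact this.symm
  have h1 : ∑ x, px x = 1 := hsum X hX
  have h2 : ∑ y, qy y = 1 := hsum Y hY
  have bridge : ∀ (op : G → G → G) (t : G) (r : G → G),
      (∀ x y, op x y = t ↔ y = r x) →
      (μ ((fun ω => op (X ω) (Y ω)) ⁻¹' {t})).toReal = ∑ x, px x * qy (r x) := by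
    intro op t r hop
    have hdisj : Pairwise (Function.onFun Disjoint
        fun x : G => X ⁻¹' {x} ∩ Y ⁻¹' {r x}) := by
      intro a b hab
      rw [Function.onFun, Set.disjoint_left]
      rintro ω ⟨ha, _⟩ ⟨hb, _⟩
      exact hab (by rw [← Set.mem_singleton_iff.1 ha, ← Set.mem_singleton_iff.1 hb])
    have hset : (fun ω => op (X ω) (Y ω)) ⁻¹' {t}
        = ⋃ x : G, (X ⁻¹' {x} ∩ Y ⁻¹' {r x}) := by
      ext ω
      simp only [Set.mem_preimage, Set.mem_singleton_iff, Set.mem_iUnion,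
        Set.mem_inter_iff]
      constructor
      · intro h
        exact ⟨X ω, rfl, (hop _ _).1 h⟩
      · rintro ⟨x, hx, hy⟩
        rw [hx]
        exact (hop x (Y ω)).2 hy
    rw [hset, measure_iUnion hdisj (fun x =>
      (hX (measurableSet_singleton x)).inter (hY (measurableSet_singleton (r x)))),
      tsum_fintype, ENNReal.toReal_sum (fun a _ => measure_ne_top μ _)]
    refine Finset.sum_congr rfl fun x _ => ?_
    rw [hind.measure_inter_preimage_eq_mul _ _ (measurableSet_singleton x)
      (measurableSet_singleton (r x)), ENNReal.toReal_mul]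
  have eadd : ent μ (fun ω => X ω + Y ω) = ∑ s, Real.negMulLog (EntAux.conv px qy s) := by
    unfold ent
    refine Finset.sum_congr rfl fun s _ => ?_
    have hop : ∀ x y : G, x + y = s ↔ y = s - x := by
      intro x y
      constructor
      · intro h; rw [← h]; abel
      · intro h; rw [h]; abel
    rw [bridge (fun a b => a + b) s (fun x => s - x) hop]
    rfl
  have esub : ent μ (fun ω => X ω - Y ω) = ∑ d, Real.negMulLog (EntAux.dcnv px qy d) := by
    unfold ent
    refine Finset.sum_congr rfl fun d _ => ?_
    have hop : ∀ x y : G, x - y = d ↔ y = x - d := by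
      intro x y
      constructor
      · intro h; rw [← h]; abel
      · intro h; rw [h]; abel
    rw [bridge (fun a b => a - b) d (fun x => x - d) hop]
    rfl
  have eX : ent μ X = ∑ x, Real.negMulLog (px x) := rfl
  have eY : ent μ Y = ∑ y, Real.negMulLog (qy y) := rfl
  rw [eadd, esub, eX, eY]
  exact EntAux.main_ineq px qy hpx0 hqy0 h1 h2
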